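/- If a₁ and a₂ are piecewise linear functions on a common interval with b₁ and b₂ breakpoints respectively, then the pointwise minimum min(a₁, a₂) is piecewise linear with at most 2(b₁ + b₂) - 3 breakpoints. -/

import Mathlib

private lemma cover_lemma (t : ℕ → ℝ) (n : ℕ) (p q : ℝ) (hpq : p < q)
    (h0 : t 0 ≤ p) (hn : q ≤ t n)
    (hgap : ∀ j, j ≤ n → ¬(p < t j ∧ t j < q)) :
    ∃ i, i + 1 ≤ n ∧ t i ≤ p ∧ q ≤ t (i + 1) := by
  classical
  set i := Nat.findGreatest (fun j => t j ≤ p) n with hi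
  have hPi : t i ≤ p := Nat.findGreatest_spec (P := fun j => t j ≤ p) (Nat.zero_le n) h0
  have hin : i ≤ n := Nat.findGreatest_le n
  have hilt : i + 1 ≤ n := by
    rcases lt_or_eq_of_le hin with h | h
    · omega
    · exfalso; rw [h] at hPi; linarith
  have h1 : p < t (i + 1) := by
    have hnot := Nat.findGreatest_is_greatest (P := fun j => t j ≤ p) (Nat.lt_succ_self i) hilt
    exact lt_of_not_ge hnot
  have h2 := hgap (i + 1) hilt
  push_neg at h2
  exact ⟨i, hilt, hPi, h2 h1⟩

private lemma step_mono (t : ℕ → ℝ) (n : ℕ)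
    (h : ∀ i, i + 1 ≤ n → t i < t (i + 1)) (j k : ℕ) (hjk : j ≤ k) :
    k ≤ n → t j ≤ t k := by
  induction k, hjk using Nat.le_induction with
  | base => intro _; exact le_rfl
  | succ k hjk ih => intro hkn; exact le_trans (ih (by omega)) (le_of_lt (h k hkn))

private lemma sorted_getD_le (l : List ℝ) (hl : l.Pairwise (· < ·)) {i j : ℕ}
    (hij : i ≤ j) (hj : j < l.length) : l.getD i 0 ≤ l.getD j 0 := by
  rcases eq_or_lt_of_le hij with rfl | hij'
  · exact le_rfl
  · have hi : i < l.length := lt_trans hij' hj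
    rw [List.getD_eq_getElem (hn := hi), List.getD_eq_getElem (hn := hj)]
    exact le_of_lt (List.Pairwise.rel_get_of_lt hl hij')

private lemma sorted_getD_lt (l : List ℝ) (hl : l.Pairwise (· < ·)) {i j : ℕ}
    (hij : i < j) (hj : j < l.length) : l.getD i 0 < l.getD j 0 := by
  have hi : i < l.length := lt_trans hij hj
  rw [List.getD_eq_getElem (hn := hi), List.getD_eq_getElem (hn := hj)]
  exact List.Pairwise.rel_get_of_lt hl hij

private lemma sort_getD_mem (F : Finset ℝ) (j : ℕ) (hj : j < (F.sort (· ≤ ·)).length) :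
    (F.sort (· ≤ ·)).getD j 0 ∈ F := by
  rw [List.getD_eq_getElem (hn := hj), ← Finset.mem_sort (α := ℝ) (· ≤ ·)]
  exact List.getElem_mem hj

private lemma exists_index (F : Finset ℝ) (x : ℝ) (hx : x ∈ F) :
    ∃ j, j < (F.sort (· ≤ ·)).length ∧ (F.sort (· ≤ ·)).getD j 0 = x := by
  have hx' : x ∈ F.sort (· ≤ ·) := (Finset.mem_sort _).2 hx
  obtain ⟨⟨j, hj⟩, hget⟩ := List.mem_iff_get.1 hx'
  exact ⟨j, hj, by rw [List.getD_eq_getElem (hn := hj)]; exact hget⟩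

private lemma sort_head_eq (F : Finset ℝ) (m : ℝ) (hm : m ∈ F) (hmin : ∀ x ∈ F, m ≤ x) :
    (F.sort (· ≤ ·)).getD 0 0 = m := by
  obtain ⟨j, hj, hx⟩ := exists_index F m hm
  have h1 : (F.sort (· ≤ ·)).getD 0 0 ≤ m := hx ▸ sorted_getD_le _ (Finset.sortedLT_sort F).pairwise (Nat.zero_le j) hj
  have h2 : m ≤ (F.sort (· ≤ ·)).getD 0 0 := hmin _ (sort_getD_mem F 0 (by omega))
  linarith

private lemma sort_last_eq (F : Finset ℝ) (m : ℝ) (hm : m ∈ F) (hmax : ∀ x ∈ F, x ≤ m) :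
    (F.sort (· ≤ ·)).getD (F.card - 1) 0 = m := by
  obtain ⟨j, hj, hx⟩ := exists_index F m hm
  have hlen : (F.sort (· ≤ ·)).length = F.card := Finset.length_sort _
  have h1 : m ≤ (F.sort (· ≤ ·)).getD (F.card - 1) 0 :=
    hx ▸ sorted_getD_le _ (Finset.sortedLT_sort F).pairwise (by omega) (by omega)
  have h2 : (F.sort (· ≤ ·)).getD (F.card - 1) 0 ≤ m := hmax _ (sort_getD_mem F _ (by omega))
  linarith

private lemma exists_zero (P e u v : ℝ) (huv : u < v) (h1 : P*u+e < 0) (h2 : 0 < P*v+e) :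
    ∃ z, u < z ∧ z < v ∧ P*z+e = 0 := by
  have hP : 0 < P := by nlinarith
  refine ⟨-e/P, ?_, ?_, ?_⟩
  · rw [lt_div_iff₀ hP]; linarith
  · rw [div_lt_iff₀ hP]; linarith
  · field_simp; ring

private lemma no_crossing (P e u v x0 : ℝ) (huv : u < v)
    (h1 : P*u + e < 0) (h2 : 0 < P*v + e) (h0 : P*x0 + e = 0)
    (hout : x0 ≤ u ∨ v ≤ x0) : False := by
  have hA1 : P*(u - x0) < 0 := by nlinarith
  have hA2 : 0 < P*(v - x0) := by nlinarith
  rcases hout with h | h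
  · nlinarith [mul_nonneg (sub_nonneg.2 h) hA2.le,
      mul_neg_of_neg_of_pos hA1 (by linarith : (0:ℝ) < v - x0)]
  · nlinarith [mul_nonpos_of_nonneg_of_nonpos (by linarith : (0:ℝ) ≤ x0 - v) hA1.le,
      mul_pos hA2 (by linarith : (0:ℝ) < x0 - u)]

private lemma affine_le (mA cA mB cB u v x : ℝ) (hu : u ≤ x) (hx : x ≤ v) (huv : u < v)
    (h1 : mA*u+cA ≤ mB*u+cB) (h2 : mA*v+cA ≤ mB*v+cB) : mA*x+cA ≤ mB*x+cB := by
  nlinarith [mul_nonpos_of_nonneg_of_nonpos (by linarith : (0:ℝ) ≤ v - x) (by linarith : mA*u+cA - (mB*u+cB) ≤ 0),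
    mul_nonpos_of_nonneg_of_nonpos (by linarith : (0:ℝ) ≤ x - u) (by linarith : mA*v+cA - (mB*v+cB) ≤ 0)]

/-- `f` is piecewise linear with `b` breakpoints `t 0 < t 1 < ⋯ < t (b-1)`,
affine between consecutive breakpoints. -/
def PiecewiseLinearOn (f : ℝ → ℝ) (t : ℕ → ℝ) (b : ℕ) : Prop :=
  (∀ i, i + 1 ≤ b - 1 → t i < t (i + 1)) ∧
  ∀ i, i + 1 ≤ b - 1 → ∃ m c : ℝ, ∀ x ∈ Set.Icc (t i) (t (i + 1)), f x = m * x + c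

/-- the pointwise minimum of two piecewise linear functions on a
common interval with `b₁` and `b₂` breakpoints is piecewise linear with at most
`2 * (b₁ + b₂) - 3` breakpoints. -/
theorem min_breakpoint_bound
    (a₁ a₂ : ℝ → ℝ) (b₁ b₂ : ℕ) (t1 t2 : ℕ → ℝ)
    (hb₁ : 2 ≤ b₁) (hb₂ : 2 ≤ b₂)
    (hlo : t1 0 = t2 0) (hhi : t1 (b₁ - 1) = t2 (b₂ - 1))
    (h₁ : PiecewiseLinearOn a₁ t1 b₁) (h₂ : PiecewiseLinearOn a₂ t2 b₂) :
    ∃ (b : ℕ) (t : ℕ → ℝ), b ≤ 2 * (b₁ + b₂) - 3 ∧ t 0 = t1 0 ∧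
      t (b - 1) = t1 (b₁ - 1) ∧
      PiecewiseLinearOn (fun x => min (a₁ x) (a₂ x)) t b := by
  classical
  obtain ⟨hm1, ha1⟩ := h₁
  obtain ⟨hm2, ha2⟩ := h₂
  set lo := t1 0 with hlo_def
  set hi := t1 (b₁ - 1) with hhi_def
  have hmono1 := step_mono t1 (b₁-1) hm1
  have hmono2 := step_mono t2 (b₂-1) hm2
  have hlohi : lo < hi := by
    have h01 : t1 0 < t1 1 := hm1 0 (by omega)
    have h1n := hmono1 1 (b₁-1) (by omega) le_rfl
    linarith
  set A : Finset ℝ := (Finset.range b₁).image t1 with hA_def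
  set B : Finset ℝ := (Finset.range b₂).image t2 with hB_def
  set M : Finset ℝ := A ∪ B with hM_def
  set s : List ℝ := M.sort (· ≤ ·) with hs_def
  have hssort : s.Pairwise (· < ·) := (Finset.sortedLT_sort M).pairwise
  have hslen : s.length = M.card := Finset.length_sort _
  set sg : ℕ → ℝ := fun k => s.getD k 0 with hsg_def
  have hsg_mem : ∀ k, k < s.length → sg k ∈ M := fun k hk => sort_getD_mem M k hk
  have hloM : lo ∈ M := by
    refine Finset.mem_union_left _ (Finset.mem_image.2 ⟨0, Finset.mem_range.2 (by omega), rfl⟩)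
  have hhiM : hi ∈ M := by
    refine Finset.mem_union_left _ (Finset.mem_image.2 ⟨b₁-1, Finset.mem_range.2 (by omega), rfl⟩)
  have hMpos : 0 < M.card := Finset.card_pos.2 ⟨lo, hloM⟩
  have hMmem : ∀ x ∈ M, lo ≤ x ∧ x ≤ hi := by
    intro x hx
    rcases Finset.mem_union.1 hx with hx | hx
    · obtain ⟨j, hj, rfl⟩ := Finset.mem_image.1 hx
      rw [Finset.mem_range] at hj
      exact ⟨hmono1 0 j (Nat.zero_le j) (by omega), hmono1 j (b₁-1) (by omega) le_rfl⟩
    · obtain ⟨j, hj, rfl⟩ := Finset.mem_image.1 hx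
      rw [Finset.mem_range] at hj
      rw [hlo, hhi]
      exact ⟨hmono2 0 j (Nat.zero_le j) (by omega), hmono2 j (b₂-1) (by omega) le_rfl⟩
  have hsg0 : sg 0 = lo := sort_head_eq M lo hloM (fun x hx => (hMmem x hx).1)
  have hsglast : sg (M.card - 1) = hi := sort_last_eq M hi hhiM (fun x hx => (hMmem x hx).2)
  -- crossing points
  set cross : ℕ → ℝ := fun k =>
    if h : ∃ x, sg k < x ∧ x < sg (k+1) ∧ a₁ x = a₂ x then h.choose else lo with hcross_def
  set X : Finset ℝ := (Finset.range (M.card - 1)).image cross with hX_def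
  set T : Finset ℝ := M ∪ X with hT_def
  have hTmem : ∀ x ∈ T, lo ≤ x ∧ x ≤ hi := by
    intro x hx
    rcases Finset.mem_union.1 hx with hx | hx
    · exact hMmem x hx
    · obtain ⟨k, hk, rfl⟩ := Finset.mem_image.1 hx
      rw [Finset.mem_range] at hk
      rw [hcross_def]
      dsimp only
      split_ifs with hex
      · obtain ⟨h1, h2, _⟩ := hex.choose_spec
        have hk1 : k < s.length := by omega
        have hk2 : k + 1 < s.length := by omega
        have e1 := (hMmem _ (hsg_mem k hk1)).1
        have e2 := (hMmem _ (hsg_mem (k+1) hk2)).2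
        exact ⟨by linarith, by linarith⟩
      · exact ⟨le_rfl, hlohi.le⟩
  have hloT : lo ∈ T := Finset.mem_union_left _ hloM
  have hhiT : hi ∈ T := Finset.mem_union_left _ hhiM
  -- cardinality bound
  have hMcard : M.card ≤ b₁ + b₂ - 2 := by
    have hsub : ({lo, hi} : Finset ℝ) ⊆ B := by
      intro x hx
      rcases Finset.mem_insert.1 hx with rfl | hx
      · exact Finset.mem_image.2 ⟨0, Finset.mem_range.2 (by omega), hlo.symm⟩
      · rw [Finset.mem_singleton] at hx
        subst hx
        exact Finset.mem_image.2 ⟨b₂-1, Finset.mem_range.2 (by omega), hhi.symm⟩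
    have hpair : ({lo, hi} : Finset ℝ).card = 2 := Finset.card_pair (ne_of_lt hlohi)
    have hBsd : (B \ {lo, hi}).card = B.card - 2 := by rw [Finset.card_sdiff_of_subset hsub, hpair]
    have hBcard : B.card ≤ b₂ := le_trans (Finset.card_image_le) (by simp)
    have hAcard : A.card ≤ b₁ := le_trans (Finset.card_image_le) (by simp)
    have h1 : M ⊆ A ∪ (B \ {lo, hi}) := by
      intro x hx
      rcases Finset.mem_union.1 hx with h | h
      · exact Finset.mem_union_left _ h
      · by_cases hx2 : x = lo ∨ x = hi
        · rcases hx2 with rfl | rfl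
          · exact Finset.mem_union_left _ (Finset.mem_image.2 ⟨0, Finset.mem_range.2 (by omega), rfl⟩)
          · exact Finset.mem_union_left _ (Finset.mem_image.2 ⟨b₁-1, Finset.mem_range.2 (by omega), rfl⟩)
        · push_neg at hx2
          refine Finset.mem_union_right _ (Finset.mem_sdiff.2 ⟨h, ?_⟩)
          simp only [Finset.mem_insert, Finset.mem_singleton]
          tauto
    have := Finset.card_le_card h1
    have := Finset.card_union_le A (B \ {lo, hi})
    omega
  have hXcard : X.card ≤ M.card - 1 := le_trans (Finset.card_image_le) (by simp)
  have hTcard : T.card ≤ 2 * (b₁ + b₂) - 3 := by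
    have h : T.card ≤ M.card + X.card := Finset.card_union_le M X
    omega
  -- the final breakpoint list
  set L : List ℝ := T.sort (· ≤ ·) with hL_def
  have hLsort : L.Pairwise (· < ·) := (Finset.sortedLT_sort T).pairwise
  have hLlen : L.length = T.card := Finset.length_sort _
  have hTpos : 0 < T.card := Finset.card_pos.2 ⟨lo, hloT⟩
  set t : ℕ → ℝ := fun i => L.getD i 0 with ht_def
  have ht0 : t 0 = lo := sort_head_eq T lo hloT (fun x hx => (hTmem x hx).1)
  have htlast : t (T.card - 1) = hi := sort_last_eq T hi hhiT (fun x hx => (hTmem x hx).2)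
  refine ⟨T.card, t, hTcard, ht0, htlast, ?_, ?_⟩
  · -- strict monotonicity
    intro i hile
    exact sorted_getD_lt L hLsort (Nat.lt_succ_self i) (by omega)
  · -- affineness on each piece
    intro i hile
    have hi1len : i + 1 < L.length := by omega
    have hilen : i < L.length := by omega
    set u := t i with hu_def
    set v := t (i+1) with hv_def
    have huv : u < v := sorted_getD_lt L hLsort (Nat.lt_succ_self i) hi1len
    have huT : u ∈ T := sort_getD_mem T i hilen
    have hvT : v ∈ T := sort_getD_mem T (i+1) hi1len
    have hTgap : ∀ x ∈ T, ¬(u < x ∧ x < v) := by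
      intro x hx
      obtain ⟨j, hj, rfl⟩ := exists_index T x hx
      rintro ⟨hc1, hc2⟩
      rcases le_or_gt j i with hji | hji
      · exact absurd (sorted_getD_le L hLsort hji hilen) (not_le.2 hc1)
      · exact absurd (sorted_getD_le L hLsort hji hj) (not_le.2 hc2)
    -- find the M-interval containing [u,v]
    obtain ⟨k, hk, hku, hkv⟩ := cover_lemma sg (M.card - 1) u v huv
      (by rw [hsg0]; exact (hTmem u huT).1)
      (by rw [hsglast]; exact (hTmem v hvT).2)
      (fun j hj hcon => hTgap (sg j) (Finset.mem_union_left _ (hsg_mem j (by omega))) hcon)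
    have hkl : k + 1 < s.length := by omega
    have hskk : sg k < sg (k+1) := lt_of_le_of_lt hku (lt_of_lt_of_le huv hkv)
    have hMgap : ∀ x ∈ M, ¬(sg k < x ∧ x < sg (k+1)) := by
      intro x hx
      obtain ⟨j', hj', rfl⟩ := exists_index M x hx
      rintro ⟨hc1, hc2⟩
      rcases le_or_gt j' k with h | h
      · exact absurd (sorted_getD_le s hssort h (by omega)) (not_le.2 hc1)
      · exact absurd (sorted_getD_le s hssort h hj') (not_le.2 hc2)
    -- affine pieces of a₁ and a₂ covering [sg k, sg (k+1)]
    obtain ⟨i₁, hi₁, h1l, h1r⟩ := cover_lemma t1 (b₁-1) (sg k) (sg (k+1)) hskk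
      ((hMmem _ (hsg_mem k (by omega))).1)
      ((hMmem _ (hsg_mem (k+1) hkl)).2)
      (fun j hj hcon => hMgap (t1 j)
        (Finset.mem_union_left _ (Finset.mem_image.2 ⟨j, Finset.mem_range.2 (by omega), rfl⟩)) hcon)
    obtain ⟨i₂, hi₂, h2l, h2r⟩ := cover_lemma t2 (b₂-1) (sg k) (sg (k+1)) hskk
      (le_trans (le_of_eq (show t2 0 = lo from hlo.symm)) ((hMmem _ (hsg_mem k (by omega))).1))
      (le_trans ((hMmem _ (hsg_mem (k+1) hkl)).2) (le_of_eq (show hi = t2 (b₂-1) from hhi)))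
      (fun j hj hcon => hMgap (t2 j)
        (Finset.mem_union_right _ (Finset.mem_image.2 ⟨j, Finset.mem_range.2 (by omega), rfl⟩)) hcon)
    obtain ⟨m₁, c₁, hrep1⟩ := ha1 i₁ hi₁
    obtain ⟨m₂, c₂, hrep2⟩ := ha2 i₂ hi₂
    have hA : ∀ x ∈ Set.Icc (sg k) (sg (k+1)), a₁ x = m₁*x+c₁ := fun x hx =>
      hrep1 x (Set.Icc_subset_Icc h1l h1r hx)
    have hB : ∀ x ∈ Set.Icc (sg k) (sg (k+1)), a₂ x = m₂*x+c₂ := fun x hx =>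
      hrep2 x (Set.Icc_subset_Icc h2l h2r hx)
    have hsubuv : Set.Icc u v ⊆ Set.Icc (sg k) (sg (k+1)) := Set.Icc_subset_Icc hku hkv
    have huI : u ∈ Set.Icc (sg k) (sg (k+1)) := ⟨hku, by linarith⟩
    have hvI : v ∈ Set.Icc (sg k) (sg (k+1)) := ⟨by linarith, hkv⟩
    by_cases hc1 : m₁*u+c₁ - (m₂*u+c₂) ≤ 0 ∧ m₁*v+c₁ - (m₂*v+c₂) ≤ 0
    · refine ⟨m₁, c₁, ?_⟩
      intro x hx
      have e1 := hA x (hsubuv hx)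
      have e2 := hB x (hsubuv hx)
      simp only
      rw [e1, e2]
      exact min_eq_left (affine_le m₁ c₁ m₂ c₂ u v x hx.1 hx.2 huv (by linarith [hc1.1]) (by linarith [hc1.2]))
    · by_cases hc2 : 0 ≤ m₁*u+c₁ - (m₂*u+c₂) ∧ 0 ≤ m₁*v+c₁ - (m₂*v+c₂)
      · refine ⟨m₂, c₂, ?_⟩
        intro x hx
        have e1 := hA x (hsubuv hx)
        have e2 := hB x (hsubuv hx)
        simp only
        rw [e1, e2]
        exact min_eq_right (affine_le m₂ c₂ m₁ c₁ u v x hx.1 hx.2 huv (by linarith [hc2.1]) (by linarith [hc2.2]))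
      · exfalso
        have hcases : (m₁*u+c₁ - (m₂*u+c₂) < 0 ∧ 0 < m₁*v+c₁ - (m₂*v+c₂)) ∨
            (m₁*v+c₁ - (m₂*v+c₂) < 0 ∧ 0 < m₁*u+c₁ - (m₂*u+c₂)) := by
          push_neg at hc1 hc2
          rcases le_or_gt (m₁*u+c₁ - (m₂*u+c₂)) 0 with h | h
          · rcases eq_or_lt_of_le h with heq | hlt
            · exact absurd (hc2 (le_of_eq heq.symm)).le (not_le.2 (hc1 h))
            · exact Or.inl ⟨hlt, hc1 h⟩
          · exact Or.inr ⟨hc2 h.le, h⟩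
        have hzex : ∃ z, u < z ∧ z < v ∧ (m₁-m₂)*z + (c₁-c₂) = 0 := by
          rcases hcases with ⟨h1, h2⟩ | ⟨h1, h2⟩
          · exact exists_zero (m₁-m₂) (c₁-c₂) u v huv (by linarith) (by linarith)
          · obtain ⟨z, hz1, hz2, hz3⟩ :=
              exists_zero (-(m₁-m₂)) (-(c₁-c₂)) u v huv (by linarith) (by linarith)
            exact ⟨z, hz1, hz2, by linarith⟩
        obtain ⟨z, hz1, hz2, hz0⟩ := hzex
        have hzI : z ∈ Set.Icc (sg k) (sg (k+1)) := ⟨by linarith, by linarith⟩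
        have hcrossex : ∃ x, sg k < x ∧ x < sg (k+1) ∧ a₁ x = a₂ x := by
          refine ⟨z, by linarith, by linarith, ?_⟩
          rw [hA z hzI, hB z hzI]
          linarith
        have hck : cross k = hcrossex.choose := by
          rw [hcross_def]; exact dif_pos hcrossex
        obtain ⟨hx0l, hx0r, hx0eq⟩ := hcrossex.choose_spec
        set x0 := hcrossex.choose with hx0_def
        have hx0T : x0 ∈ T := by
          rw [← hck]
          exact Finset.mem_union_right _
            (Finset.mem_image.2 ⟨k, Finset.mem_range.2 (by omega), rfl⟩)
        have hx0I : x0 ∈ Set.Icc (sg k) (sg (k+1)) := ⟨hx0l.le, hx0r.le⟩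
        have hg0 : (m₁-m₂)*x0 + (c₁-c₂) = 0 := by
          have e1 := hA x0 hx0I
          have e2 := hB x0 hx0I
          rw [e1, e2] at hx0eq
          linarith
        have hout : x0 ≤ u ∨ v ≤ x0 := by
          by_contra hc
          push_neg at hc
          exact hTgap x0 hx0T ⟨hc.1, hc.2⟩
        rcases hcases with ⟨h1, h2⟩ | ⟨h1, h2⟩
        · exact no_crossing (m₁-m₂) (c₁-c₂) u v x0 huv (by linarith) (by linarith) hg0 hout
        · exact no_crossing (-(m₁-m₂)) (-(c₁-c₂)) u v x0 huv (by linarith) (by linarith)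
            (by linarith) hout
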